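/- Let f : ℝ^d → ℝ be differentiable and L-gradient Lipschitz with L ≥ 0. Let η > 0, r ≥ 0, and let x, v, ξ ∈ ℝ^d with ‖ξ‖ ≤ r, and set x₊ = x − η(v − ξ). Then f(x₊) ≤ f(x) + η‖v − ∇f(x)‖² − (η/2)‖∇f(x)‖² − (1/(2η) − L/2)‖x₊ − x‖² + η r². -/

import Mathlib

open intervalIntegral in
lemma descent_lemma {d : ℕ} (f : EuclideanSpace ℝ (Fin d) → ℝ) (L : ℝ) (hL : 0 ≤ L)
    (hf : Differentiable ℝ f)
    (hlip : ∀ x y : EuclideanSpace ℝ (Fin d),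
      ‖gradient f x - gradient f y‖ ≤ L * ‖x - y‖)
    (x y : EuclideanSpace ℝ (Fin d)) :
    f y ≤ f x + inner ℝ (gradient f x) (y - x) + L / 2 * ‖y - x‖ ^ 2 := by
  set p : ℝ → EuclideanSpace ℝ (Fin d) := fun t => x + t • (y - x) with hp
  have hpderiv : ∀ t : ℝ, HasDerivAt p (y - x) t := fun t => by
    simpa [hp] using ((hasDerivAt_id t).smul_const (y - x)).const_add x
  have hgderiv : ∀ t : ℝ,
      HasDerivAt (fun s => f (p s)) (inner ℝ (gradient f (p t)) (y - x)) t := by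
    intro t
    have h1 : HasFDerivAt f
        ((InnerProductSpace.toDual ℝ _) (gradient f (p t))) (p t) :=
      (hf (p t)).hasGradientAt.hasFDerivAt
    exact h1.comp_hasDerivAt t (hpderiv t)
  have hgradcont : Continuous (gradient f) := by
    refine (LipschitzWith.of_dist_le_mul (K := ⟨L, hL⟩) fun a b => ?_).continuous
    rw [dist_eq_norm, dist_eq_norm]
    exact hlip a b
  have hcont : Continuous (fun t : ℝ => (inner ℝ (gradient f (p t)) (y - x) : ℝ)) := by
    apply Continuous.inner
    · exact hgradcont.comp (continuous_const.add (continuous_id.smul continuous_const))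
    · exact continuous_const
  have hftc : f y - f x = ∫ t in (0:ℝ)..(1:ℝ), inner ℝ (gradient f (p t)) (y - x) := by
    have := integral_eq_sub_of_hasDerivAt (f := fun s => f (p s))
      (fun t _ => hgderiv t) (hcont.intervalIntegrable 0 1)
    simp only [hp] at this
    simpa using this.symm
  have hbound : ∀ t ∈ Set.Icc (0:ℝ) 1,
      (inner ℝ (gradient f (p t)) (y - x) : ℝ)
        ≤ inner ℝ (gradient f x) (y - x) + L * t * ‖y - x‖ ^ 2 := by
    intro t ht
    have h1 : (inner ℝ (gradient f (p t)) (y - x) : ℝ) - inner ℝ (gradient f x) (y - x)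
        = inner ℝ (gradient f (p t) - gradient f x) (y - x) := by
      rw [inner_sub_left]
    have h2 : (inner ℝ (gradient f (p t) - gradient f x) (y - x) : ℝ)
        ≤ ‖gradient f (p t) - gradient f x‖ * ‖y - x‖ :=
      real_inner_le_norm _ _
    have h3 : ‖gradient f (p t) - gradient f x‖ ≤ L * (t * ‖y - x‖) := by
      have := hlip (p t) x
      have h4 : ‖p t - x‖ = t * ‖y - x‖ := by
        simp only [hp, add_sub_cancel_left, norm_smul, Real.norm_eq_abs,
          abs_of_nonneg ht.1]
      rw [h4] at this; exact this
    nlinarith [norm_nonneg (y - x), mul_le_mul_of_nonneg_right h3 (norm_nonneg (y - x))]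
  have hint : (∫ t in (0:ℝ)..(1:ℝ), inner ℝ (gradient f (p t)) (y - x))
      ≤ ∫ t in (0:ℝ)..(1:ℝ), (inner ℝ (gradient f x) (y - x) + L * t * ‖y - x‖ ^ 2 : ℝ) := by
    apply integral_mono_on (by norm_num) (hcont.intervalIntegrable 0 1)
      ((continuous_const.add ((continuous_const.mul continuous_id).mul
        continuous_const)).intervalIntegrable 0 1)
      hbound
  have hval : (∫ t in (0:ℝ)..(1:ℝ), (inner ℝ (gradient f x) (y - x) + L * t * ‖y - x‖ ^ 2 : ℝ))
      = inner ℝ (gradient f x) (y - x) + L / 2 * ‖y - x‖ ^ 2 := by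
    have h1 : ∀ t : ℝ, (inner ℝ (gradient f x) (y - x) + L * t * ‖y - x‖ ^ 2 : ℝ)
        = (inner ℝ (gradient f x) (y - x) : ℝ) + (L * ‖y - x‖ ^ 2) * t := fun t => by ring
    simp_rw [h1]
    rw [integral_add intervalIntegrable_const
      ((by fun_prop : Continuous fun t : ℝ => L * ‖y - x‖ ^ 2 * t).intervalIntegrable 0 1),
      integral_const_mul, integral_id, integral_const]
    simp; ring
  linarith [hftc ▸ hint.trans_eq hval]

/-- One-step descent inequality: if `f` is differentiable with `L`-Lipschitz
gradient, `η > 0`, `r ≥ 0`, `‖ξ‖ ≤ r`, and `x₊ = x - η (v - ξ)`, then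
`f x₊ ≤ f x + η ‖v - ∇f x‖² - (η/2) ‖∇f x‖² - (1/(2η) - L/2) ‖x₊ - x‖² + η r²`. -/
theorem stmt_1 {d : ℕ} (f : EuclideanSpace ℝ (Fin d) → ℝ) (L : ℝ) (hL : 0 ≤ L)
    (hf : Differentiable ℝ f)
    (hlip : ∀ x y : EuclideanSpace ℝ (Fin d),
      ‖gradient f x - gradient f y‖ ≤ L * ‖x - y‖)
    (η r : ℝ) (hη : 0 < η) (hr : 0 ≤ r)
    (x v ξ xp : EuclideanSpace ℝ (Fin d)) (hξ : ‖ξ‖ ≤ r)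
    (hxp : xp = x - η • (v - ξ)) :
    f xp ≤ f x + η * ‖v - gradient f x‖ ^ 2 - (η / 2) * ‖gradient f x‖ ^ 2
      - (1 / (2 * η) - L / 2) * ‖xp - x‖ ^ 2 + η * r ^ 2 := by
  set g := gradient f x with hg
  set u := v - ξ with hu
  have hxpx : xp - x = -(η • u) := by rw [hxp]; abel
  have hdesc := descent_lemma f L hL hf hlip x xp
  have hip : (inner ℝ g (xp - x) : ℝ) = -(η * inner ℝ g u) := by
    rw [hxpx, inner_neg_right, real_inner_smul_right]
  have hpol : ‖g - u‖ ^ 2 = ‖g‖ ^ 2 - 2 * inner ℝ g u + ‖u‖ ^ 2 := by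
    rw [@norm_sub_sq_real]
  have hnx : ‖xp - x‖ ^ 2 = η ^ 2 * ‖u‖ ^ 2 := by
    rw [hxpx, norm_neg, norm_smul, Real.norm_eq_abs, abs_of_pos hη, mul_pow]
  have hgu : ‖g - u‖ ≤ ‖v - g‖ + r := by
    have : g - u = -(v - g) + ξ := by rw [hu]; abel
    rw [this]
    exact (norm_add_le _ _).trans (by rw [norm_neg]; linarith)
  have hgu2 : ‖g - u‖ ^ 2 ≤ 2 * ‖v - g‖ ^ 2 + 2 * r ^ 2 := by
    nlinarith [norm_nonneg (g - u), norm_nonneg (v - g), sq_nonneg (‖v - g‖ - r)]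
  have hη2 : (1 / (2 * η)) * ‖xp - x‖ ^ 2 = η / 2 * ‖u‖ ^ 2 := by
    rw [hnx]; field_simp
  nlinarith [hdesc, hip, hpol, hnx, hgu2, hη2, mul_le_mul_of_nonneg_left hgu2 hη.le]
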